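/- Suppose E_g : [0, ∞) → R is C^1 with 0 < c_0 ≤ E_g(s) ≤ c_1 for all s, and E_g'(s) → 0 as s → ∞. Let E : [0, T_c) → (0, ∞) be C^1 with E(0) = 1, E(t) → 0 as t → T_c, and suppose T : [0, T_c) → [0, ∞) satisfies T(t) → ∞ as t → T_c and the identity E_g'(T(t))/(2 E_g(T(t))) - (1/2) E_g(T(t))^{1/2} E'(t) E(t)^{a - 3/2} = 1 for all t ∈ [0, T_c). Then there exist t_0 ∈ [0, T_c) and constants 0 < D_2 ≤ D_1 such that -D_1 ≤ E'(t) E(t)^{a - 3/2} ≤ -D_2 for all t ∈ (t_0, T_c). -/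
import Mathlib


open Set Filter

/-- Key asymptotic step for the anomalous cooling laws: from the identity
`E_g'(T(t))/(2E_g(T(t))) - (1/2)E_g(T(t))^{1/2} E'(t) E(t)^{a-3/2} = 1`,
the uniform bounds on `E_g` and the vanishing of `E_g'` at infinity, one gets
uniform two-sided bounds `-D₁ ≤ E'(t)E(t)^{a-3/2} ≤ -D₂` near the cooling time. -/
theorem two_sided_bounds_from_identity
    (a Tc c₀ c₁ : ℝ) (hTc : 0 < Tc) (hc₀ : 0 < c₀) (hc : c₀ ≤ c₁)
    (Eg Eg' E E' T : ℝ → ℝ)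
    (hEg : ∀ s, 0 ≤ s → HasDerivAt Eg (Eg' s) s)
    (hEgbound : ∀ s, 0 ≤ s → c₀ ≤ Eg s ∧ Eg s ≤ c₁)
    (hEg'lim : Tendsto Eg' atTop (nhds 0))
    (hEpos : ∀ t ∈ Ico (0 : ℝ) Tc, 0 < E t)
    (hE0 : E 0 = 1)
    (hE : ∀ t ∈ Ico (0 : ℝ) Tc, HasDerivAt E (E' t) t)
    (hElim : Tendsto E (nhdsWithin Tc (Iio Tc)) (nhds 0))
    (hTrange : ∀ t ∈ Ico (0 : ℝ) Tc, 0 ≤ T t)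
    (hTlim : Tendsto T (nhdsWithin Tc (Iio Tc)) atTop)
    (hident : ∀ t ∈ Ico (0 : ℝ) Tc,
      Eg' (T t) / (2 * Eg (T t)) -
        (1 / 2) * Real.sqrt (Eg (T t)) * E' t * E t ^ (a - 3 / 2 : ℝ) = 1) :
    ∃ t₀ ∈ Ico (0 : ℝ) Tc, ∃ D₁ D₂ : ℝ, 0 < D₂ ∧ D₂ ≤ D₁ ∧
      ∀ t ∈ Ioo t₀ Tc,
        -D₁ ≤ E' t * E t ^ (a - 3 / 2 : ℝ) ∧ E' t * E t ^ (a - 3 / 2 : ℝ) ≤ -D₂ := by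

  have hc₁ : (0:ℝ) < c₁ := hc₀.trans_le hc
  -- eventually |Eg'(T t)| < c₀/2
  have h1 : ∀ᶠ t in nhdsWithin Tc (Iio Tc), |Eg' (T t)| < c₀ / 2 := by
    have := (Metric.tendsto_nhds.mp (hEg'lim.comp hTlim)) (c₀ / 2) (by positivity)
    simpa [Real.dist_eq] using this
  obtain ⟨l, hl, hsub⟩ := mem_nhdsLT_iff_exists_Ioo_subset.mp h1
  refine ⟨max l 0, ⟨le_max_right _ _, max_lt hl hTc⟩,
    5 / (2 * Real.sqrt c₀), 3 / (2 * Real.sqrt c₁), by positivity, ?_, ?_⟩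
  · gcongr <;> first | norm_num | exact Real.sqrt_le_sqrt hc
  intro t ht
  have ht0 : (0:ℝ) ≤ t := le_trans (le_max_right l 0) ht.1.le
  have htI : t ∈ Ico (0:ℝ) Tc := ⟨ht0, ht.2⟩
  have hq : |Eg' (T t)| < c₀ / 2 := hsub ⟨lt_of_le_of_lt (le_max_left l 0) ht.1, ht.2⟩
  have hs : 0 ≤ T t := hTrange t htI
  obtain ⟨hglb, hgub⟩ := hEgbound (T t) hs
  have hgpos : 0 < Eg (T t) := hc₀.trans_le hglb
  set g := Eg (T t) with hgdef
  set sg := Real.sqrt g with hsgdef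
  set P := E' t * E t ^ (a - 3 / 2 : ℝ) with hPdef
  have hsgpos : 0 < sg := Real.sqrt_pos.mpr hgpos
  have hsglb : Real.sqrt c₀ ≤ sg := Real.sqrt_le_sqrt hglb
  have hsgub : sg ≤ Real.sqrt c₁ := Real.sqrt_le_sqrt hgub
  have hid := hident t htI
  rw [← hgdef, ← hsgdef] at hid
  have hA : |Eg' (T t) / (2 * g)| ≤ 1 / 4 := by
    rw [abs_div, abs_of_pos (by positivity : (0:ℝ) < 2 * g)]
    have h2 : |Eg' (T t)| / (2 * g) ≤ (c₀ / 2) / (2 * c₀) :=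
      div_le_div₀ (by positivity) hq.le (by positivity) (by linarith)
    have h3 : (c₀ / 2) / (2 * c₀) = 1 / 4 := by field_simp; ring
    linarith
  rw [abs_le] at hA
  have hu : sg * P = 2 * (Eg' (T t) / (2 * g)) - 2 := by
    rw [hPdef]; nlinarith [hid]
  have hub : sg * P ≤ -(3 / 2) := by linarith
  have hlb : -(5 / 2) ≤ sg * P := by linarith
  have hPneg : P ≤ 0 := by
    by_contra h
    push_neg at h
    nlinarith [mul_pos hsgpos h]
  constructor
  · rw [neg_le, le_div_iff₀ (by positivity)]
    nlinarith [mul_nonneg (sub_nonneg.2 hsglb) (neg_nonneg.2 hPneg)]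
  · rw [le_neg, div_le_iff₀ (by positivity)]
    nlinarith [mul_nonneg (sub_nonneg.2 hsgub) (neg_nonneg.2 hPneg)]
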